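/- Consider the control system in ℝ⁴: ẋ₁ = u̇₁, ẋ₂ = u̇₂, ẋ₃ = x₃(x₂ u̇₁ - x₁ u̇₂), ẋ₄ = v + x₄(x₁ u̇₂ - x₂ u̇₁), with initial condition x(0) = (0,0,1,0). For each k ≥ 1, define on [0, 2π] the controls u_k(t) = k^{-1/3}(cos(kt) - 1, sin(kt))·χ_{[2π/k, 2π]}(t) and v_k(t) = k e^{-2π k^{1/3}} χ_{[0, 2π/k]}(t). Then the corresponding Carathéodory solution x_k satisfies x_{4_k}(2π) = 2π e^{-k^{1/3}(sin(2πk)/k + 2π/k)} and in particular x_{4_k}(2π) → 2π as k → ∞, while u_k(t) → 0 for every t ∈ [0,2π] and ‖v_k‖_{L¹([0,2π])} → 0. -/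

import Mathlib

open Set MeasureTheory Filter Topology Real

private lemma impulsive_aux (k : ℕ) (hk : 1 ≤ k) (du1 du2 v x1 x2 x4 : ℝ → ℝ)
    (hdu1 : ∀ t, du1 t = if t < 2*π/k then 0 else -((k:ℝ)^((2:ℝ)/3)) * Real.sin (k*t))
    (hdu2 : ∀ t, du2 t = if t < 2*π/k then 0 else ((k:ℝ)^((2:ℝ)/3)) * Real.cos (k*t))
    (hv : ∀ t, v t = if t ≤ 2*π/k then (k:ℝ) * Real.exp (-(2*π) * (k:ℝ)^((1:ℝ)/3)) else 0)
    (hx1 : ∀ t ∈ Icc (0:ℝ) (2*π), x1 t = ∫ s in (0:ℝ)..t, du1 s)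
    (hx2 : ∀ t ∈ Icc (0:ℝ) (2*π), x2 t = ∫ s in (0:ℝ)..t, du2 s)
    (hx4c : ContinuousOn x4 (Icc (0:ℝ) (2*π)))
    (hx4i : IntervalIntegrable (fun s => v s + x4 s * (x1 s * du2 s - x2 s * du1 s))
      volume 0 (2*π))
    (hx4 : ∀ t ∈ Icc (0:ℝ) (2*π),
      x4 t = ∫ s in (0:ℝ)..t, (v s + x4 s * (x1 s * du2 s - x2 s * du1 s))) :
    x4 (2*π) = 2*π * Real.exp (-((k:ℝ)^((1:ℝ)/3)) * (Real.sin (2*π*k)/k + 2*π/k)) := by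
  have hπ : (0:ℝ) < π := Real.pi_pos
  have hk0 : (0:ℝ) < k := by exact_mod_cast hk
  have hkne : (k:ℝ) ≠ 0 := ne_of_gt hk0
  set τ : ℝ := 2*π/k with hτdef
  have hτpos : 0 < τ := by positivity
  have hτle : τ ≤ 2*π := by
    rw [hτdef, div_le_iff₀ hk0]
    nlinarith [(by exact_mod_cast hk : (1:ℝ) ≤ k)]
  have hkτ : (k:ℝ) * τ = 2*π := by rw [hτdef]; field_simp
  set c : ℝ := (k:ℝ)^((1:ℝ)/3) with hcdef
  have hc0 : (0:ℝ) ≤ c := by positivity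
  set E : ℝ := Real.exp (-(2*π) * c) with hEdef
  have hr1 : (k:ℝ)^((2:ℝ)/3) = (k:ℝ)^(-(1:ℝ)/3) * k := by
    rw [show ((2:ℝ)/3) = -(1:ℝ)/3 + 1 by norm_num, Real.rpow_add hk0, Real.rpow_one]
  have hr2 : (k:ℝ)^(-(1:ℝ)/3) * (k:ℝ)^((2:ℝ)/3) = c := by
    rw [hcdef, ← Real.rpow_add hk0]; norm_num
  -- integrability of du1, du2
  have hii : ∀ (f : ℝ → ℝ), Continuous f → ∀ a b : ℝ,
      IntervalIntegrable ((Ici τ).indicator f) volume a b := by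
    intro f hf a b
    exact IntegrableOn.intervalIntegrable
      ((hf.integrableOn_uIcc).indicator measurableSet_Ici)
  have hind1 : du1 = (Ici τ).indicator (fun r => -((k:ℝ)^((2:ℝ)/3)) * Real.sin (k*r)) := by
    funext r; rw [hdu1 r]
    by_cases h : r < τ
    · simp [Set.indicator_apply, Set.mem_Ici, not_le.2 h]
    · simp [Set.indicator_apply, Set.mem_Ici, not_lt.1 h]
  have hind2 : du2 = (Ici τ).indicator (fun r => ((k:ℝ)^((2:ℝ)/3)) * Real.cos (k*r)) := by
    funext r; rw [hdu2 r]
    by_cases h : r < τ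
    · simp [Set.indicator_apply, Set.mem_Ici, not_le.2 h]
    · simp [Set.indicator_apply, Set.mem_Ici, not_lt.1 h]
  have hi1 : ∀ a b : ℝ, IntervalIntegrable du1 volume a b := by
    intro a b; rw [hind1]; exact hii _ (by fun_prop) a b
  have hi2 : ∀ a b : ℝ, IntervalIntegrable du2 volume a b := by
    intro a b; rw [hind2]; exact hii _ (by fun_prop) a b
  -- explicit values of x1, x2 on [τ, 2π]
  have hx1v : ∀ s ∈ Icc τ (2*π), x1 s = (k:ℝ)^(-(1:ℝ)/3) * (Real.cos (k*s) - 1) := by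
    intro s hs
    rw [hx1 s ⟨le_trans hτpos.le hs.1, hs.2⟩,
      ← intervalIntegral.integral_add_adjacent_intervals (hi1 0 τ) (hi1 τ s)]
    have h1 : ∫ r in (0:ℝ)..τ, du1 r = 0 := by
      rw [intervalIntegral.integral_congr (g := fun _ => (0:ℝ)) ?_,
        intervalIntegral.integral_zero]
      intro r hr
      rw [uIcc_of_le hτpos.le] at hr
      show du1 r = 0
      rcases lt_or_eq_of_le hr.2 with h | h
      · rw [hdu1 r, if_pos h]
      · rw [hdu1 r, if_neg (by rw [h]; exact lt_irrefl τ), h, hkτ, Real.sin_two_pi, mul_zero]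
    have h2 : ∫ r in τ..s, du1 r = (k:ℝ)^(-(1:ℝ)/3) * (Real.cos (k*s) - 1) := by
      rw [intervalIntegral.integral_congr
        (g := fun r => -((k:ℝ)^((2:ℝ)/3)) * Real.sin (k*r)) ?_]
      · have hder : ∀ r ∈ uIcc τ s, HasDerivAt (fun r => (k:ℝ)^(-(1:ℝ)/3) * Real.cos (k*r))
            (-((k:ℝ)^((2:ℝ)/3)) * Real.sin (k*r)) r := by
          intro r _
          have h0 : HasDerivAt (fun r : ℝ => (k:ℝ) * r) ((k:ℝ) * 1) r :=
            (hasDerivAt_id r).const_mul _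
          have := (h0.cos).const_mul ((k:ℝ)^(-(1:ℝ)/3))
          refine this.congr_deriv ?_
          rw [hr1]; ring
        have hint : IntervalIntegrable (fun r => -((k:ℝ)^((2:ℝ)/3)) * Real.sin (k*r))
            volume τ s :=
          Continuous.intervalIntegrable (by fun_prop) τ s
        rw [intervalIntegral.integral_eq_sub_of_hasDerivAt hder hint]
        rw [hkτ, Real.cos_two_pi]
        ring
      · intro r hr
        rw [uIcc_of_le hs.1] at hr
        show du1 r = _
        rw [hdu1 r, if_neg (not_lt.2 hr.1)]
    rw [h1, h2, zero_add]
  have hx2v : ∀ s ∈ Icc τ (2*π), x2 s = (k:ℝ)^(-(1:ℝ)/3) * Real.sin (k*s) := by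
    intro s hs
    rw [hx2 s ⟨le_trans hτpos.le hs.1, hs.2⟩,
      ← intervalIntegral.integral_add_adjacent_intervals (hi2 0 τ) (hi2 τ s)]
    have h1 : ∫ r in (0:ℝ)..τ, du2 r = 0 := by
      rw [intervalIntegral.integral_congr_ae (g := fun _ => (0:ℝ)) ?_,
        intervalIntegral.integral_zero]
      apply ae_iff.2 (measure_mono_null ?_ (measure_singleton τ))
      intro r hr
      simp only [Set.mem_setOf_eq] at hr
      obtain ⟨hmem, hne⟩ := _root_.not_imp.1 hr
      rw [Set.uIoc_of_le hτpos.le] at hmem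
      rw [Set.mem_singleton_iff]
      by_contra hrτ
      exact hne (by rw [hdu2 r, if_pos (lt_of_le_of_ne hmem.2 hrτ)])
    have h2 : ∫ r in τ..s, du2 r = (k:ℝ)^(-(1:ℝ)/3) * Real.sin (k*s) := by
      rw [intervalIntegral.integral_congr
        (g := fun r => ((k:ℝ)^((2:ℝ)/3)) * Real.cos (k*r)) ?_]
      · have hder : ∀ r ∈ uIcc τ s, HasDerivAt (fun r => (k:ℝ)^(-(1:ℝ)/3) * Real.sin (k*r))
            (((k:ℝ)^((2:ℝ)/3)) * Real.cos (k*r)) r := by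
          intro r _
          have h0 : HasDerivAt (fun r : ℝ => (k:ℝ) * r) ((k:ℝ) * 1) r :=
            (hasDerivAt_id r).const_mul _
          have := (h0.sin).const_mul ((k:ℝ)^(-(1:ℝ)/3))
          refine this.congr_deriv ?_
          rw [hr1]; ring
        have hint : IntervalIntegrable (fun r => ((k:ℝ)^((2:ℝ)/3)) * Real.cos (k*r))
            volume τ s :=
          Continuous.intervalIntegrable (by fun_prop) τ s
        rw [intervalIntegral.integral_eq_sub_of_hasDerivAt hder hint]
        rw [hkτ, Real.sin_two_pi]
        ring
      · intro r hr
        rw [uIcc_of_le hs.1] at hr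
        show du2 r = _
        rw [hdu2 r, if_neg (not_lt.2 hr.1)]
    rw [h1, h2, zero_add]
  -- the coefficient W and modified control vt
  set W : ℝ → ℝ := fun s => c * (1 - Real.cos ((k:ℝ) * max s τ)) with hWdef
  have hWcont : Continuous W := by
    have hmax : Continuous fun s : ℝ => max s τ := continuous_id.max continuous_const
    exact continuous_const.mul
      (continuous_const.sub (Real.continuous_cos.comp (continuous_const.mul hmax)))
  have hWτ : ∀ s, s ≤ τ → W s = 0 := by
    intro s h
    show c * (1 - Real.cos ((k:ℝ) * max s τ)) = 0
    rw [max_eq_right h, hkτ, Real.cos_two_pi]; ring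
  have hwW : ∀ s ∈ Icc (0:ℝ) (2*π), s ≠ τ →
      x1 s * du2 s - x2 s * du1 s = W s := by
    intro s hs hne
    by_cases h : s < τ
    · rw [hdu1 s, hdu2 s, if_pos h, if_pos h, hWτ s h.le]; ring
    · have hge : τ ≤ s := not_lt.1 h
      rw [hx1v s ⟨hge, hs.2⟩, hx2v s ⟨hge, hs.2⟩, hdu1 s, hdu2 s, if_neg h, if_neg h]
      show _ = c * (1 - Real.cos ((k:ℝ) * max s τ))
      rw [max_eq_left hge]
      have pyth := Real.sin_sq_add_cos_sq ((k:ℝ)*s)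
      linear_combination ((Real.cos ((k:ℝ)*s) - 1) * Real.cos ((k:ℝ)*s)
        + Real.sin ((k:ℝ)*s)^2) * hr2 + c * pyth
  set vt : ℝ → ℝ := fun s => if s < τ then (k:ℝ)*E else 0 with hvtdef
  set G : ℝ → ℝ := fun s => vt s + x4 s * W s with hGdef
  have hvvt : ∀ s, s ≠ τ → v s = vt s := by
    intro s hne
    show v s = if s < τ then (k:ℝ)*E else 0
    rw [hv s]
    rcases lt_trichotomy s τ with h|h|h
    · rw [if_pos h.le, if_pos h]
    · exact absurd h hne
    · rw [if_neg (not_le.2 h), if_neg (not_lt.2 h.le)]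
  have hGae : ∀ t ∈ Icc (0:ℝ) (2*π), ∀ᵐ r ∂(volume : Measure ℝ), r ∈ Set.uIoc (0:ℝ) t →
      v r + x4 r * (x1 r * du2 r - x2 r * du1 r) = G r := by
    intro t ht
    apply ae_iff.2 (measure_mono_null ?_ (measure_singleton τ))
    intro r hr
    simp only [Set.mem_setOf_eq] at hr
    obtain ⟨hmem, hne⟩ := _root_.not_imp.1 hr
    rw [Set.uIoc_of_le ht.1] at hmem
    rw [Set.mem_singleton_iff]
    by_contra hrτ
    apply hne
    have hrIcc : r ∈ Icc (0:ℝ) (2*π) := ⟨hmem.1.le, le_trans hmem.2 ht.2⟩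
    rw [hvvt r hrτ, hwW r hrIcc hrτ]
  have hGx4 : ∀ t ∈ Icc (0:ℝ) (2*π), x4 t = ∫ s in (0:ℝ)..t, G s := by
    intro t ht
    rw [hx4 t ht]
    exact intervalIntegral.integral_congr_ae (hGae t ht)
  have hGint : IntervalIntegrable G volume 0 (2*π) := by
    rw [intervalIntegrable_iff] at hx4i ⊢
    exact hx4i.congr ((ae_restrict_iff' measurableSet_uIoc).2
      (hGae (2*π) ⟨by positivity, le_rfl⟩))
  have hmemIcc : ∀ t ∈ Ico (0:ℝ) (2*π), Icc (0:ℝ) (2*π) ∈ 𝓝[Ici t] t := by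
    intro t ht
    apply mem_nhdsWithin.2 ⟨Iio (2*π), isOpen_Iio, ht.2, ?_⟩
    rintro s ⟨hs1, hs2⟩
    exact ⟨le_trans ht.1 hs2, le_of_lt hs1⟩
  have hmemIoi : ∀ t ∈ Ico (0:ℝ) (2*π), Icc (0:ℝ) (2*π) ∈ 𝓝[Ioi t] t := by
    intro t ht
    exact nhdsWithin_mono t Ioi_subset_Ici_self (hmemIcc t ht)
  have hGmeas : ∀ t ∈ Ico (0:ℝ) (2*π), StronglyMeasurableAtFilter G (𝓝[Ioi t] t) volume := by
    intro t ht
    refine ⟨Icc 0 (2*π), hmemIoi t ht, ?_⟩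
    have h1 : AEStronglyMeasurable vt (volume.restrict (Icc (0:ℝ) (2*π))) := by
      apply Measurable.aestronglyMeasurable
      exact Measurable.ite measurableSet_Iio measurable_const measurable_const
    have h2 : AEStronglyMeasurable x4 (volume.restrict (Icc (0:ℝ) (2*π))) :=
      hx4c.aestronglyMeasurable measurableSet_Icc
    exact h1.add (h2.mul hWcont.aestronglyMeasurable)
  have hvtc : ∀ t ∈ Ico (0:ℝ) (2*π), ContinuousWithinAt vt (Ici t) t := by
    intro t ht
    by_cases h : t < τ
    · have hev : vt =ᶠ[𝓝[Ici t] t] fun _ => (k:ℝ)*E := by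
        filter_upwards [nhdsWithin_le_nhds (Iio_mem_nhds h)] with s hs
        exact if_pos hs
      exact continuousWithinAt_const.congr_of_eventuallyEq hev (if_pos h)
    · refine continuousWithinAt_const.congr (f := fun _ => (0:ℝ)) (fun s hs => ?_) (if_neg h)
      exact if_neg (not_lt.2 (le_trans (not_lt.1 h) hs))
  have hGcw : ∀ t ∈ Ico (0:ℝ) (2*π), ContinuousWithinAt G (Ioi t) t := by
    intro t ht
    have hx4cw : ContinuousWithinAt x4 (Ici t) t :=
      (hx4c t ⟨ht.1, ht.2.le⟩).mono_of_mem_nhdsWithin (hmemIcc t ht)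
    exact (((hvtc t ht).add (hx4cw.mul hWcont.continuousWithinAt)).mono
      Ioi_subset_Ici_self)
  have hx4d : ∀ t ∈ Ico (0:ℝ) (2*π), HasDerivWithinAt x4 (G t) (Ici t) t := by
    intro t ht
    have htIcc : t ∈ Icc (0:ℝ) (2*π) := ⟨ht.1, ht.2.le⟩
    have hint : IntervalIntegrable G volume 0 t := by
      apply hGint.mono_set
      rw [uIcc_of_le ht.1, uIcc_of_le (by positivity : (0:ℝ) ≤ 2*π)]
      exact Icc_subset_Icc le_rfl ht.2.le
    have hFd := intervalIntegral.integral_hasDerivWithinAt_right (s := Ici t) (t := Ioi t) hint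
      (hGmeas t ht) (hGcw t ht)
    refine hFd.congr_of_eventuallyEq ?_ (hGx4 t htIcc)
    filter_upwards [hmemIcc t ht] with s hs
    exact hGx4 s hs
  -- the explicit exponent A
  set A : ℝ → ℝ := fun t => c * (max t τ - Real.sin ((k:ℝ) * max t τ)/k - τ) with hAdef
  have hA0 : ∀ t, t ≤ τ → A t = 0 := by
    intro t h
    show c * (max t τ - Real.sin ((k:ℝ) * max t τ)/k - τ) = 0
    rw [max_eq_right h, hkτ, Real.sin_two_pi]; ring
  have hAcont : Continuous A := by
    have hmax : Continuous fun s : ℝ => max s τ := continuous_id.max continuous_const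
    exact continuous_const.mul
      ((hmax.sub ((Real.continuous_sin.comp (continuous_const.mul hmax)).div_const _)).sub
        continuous_const)
  have hAd : ∀ t ∈ Ico (0:ℝ) (2*π), HasDerivWithinAt A (W t) (Ici t) t := by
    intro t _
    by_cases h : t < τ
    · have hWt : W t = 0 := hWτ t h.le
      rw [hWt]
      have hz : HasDerivWithinAt (fun _ : ℝ => (0:ℝ)) 0 (Ici t) t :=
        (hasDerivWithinAt_const t _ 0)
      refine hz.congr_of_eventuallyEq ?_ (hA0 t h.le)
      filter_upwards [nhdsWithin_le_nhds (Iio_mem_nhds h)] with s hs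
      exact hA0 s hs.le
    · have hge : τ ≤ t := not_lt.1 h
      have h0 : HasDerivAt (fun s : ℝ => (k:ℝ) * s) ((k:ℝ) * 1) t :=
        (hasDerivAt_id t).const_mul _
      have h3 : HasDerivAt (fun s : ℝ => s - Real.sin ((k:ℝ)*s)/k - τ)
          (1 - Real.cos ((k:ℝ)*t) * ((k:ℝ)*1) / k) t :=
        ((hasDerivAt_id t).sub (h0.sin.div_const _)).sub_const τ
      have h4 := h3.const_mul c
      have hval : c * (1 - Real.cos ((k:ℝ)*t) * ((k:ℝ)*1) / k) = W t := by
        show _ = c * (1 - Real.cos ((k:ℝ) * max t τ))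
        rw [max_eq_left hge]
        field_simp
      rw [← hval]
      refine (h4.hasDerivWithinAt).congr (fun s hs => ?_) ?_
      · show c * (max s τ - Real.sin ((k:ℝ) * max s τ)/k - τ) = _
        rw [max_eq_left (le_trans hge hs)]
      · show c * (max t τ - Real.sin ((k:ℝ) * max t τ)/k - τ) = _
        rw [max_eq_left hge]
  have hmind : ∀ t ∈ Ico (0:ℝ) (2*π),
      HasDerivWithinAt (fun s => (k:ℝ)*E * min s τ) (vt t) (Ici t) t := by
    intro t _
    by_cases h : t < τ
    · have : vt t = (k:ℝ)*E := if_pos h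
      rw [this]
      have hder : HasDerivWithinAt (fun s : ℝ => (k:ℝ)*E*s) ((k:ℝ)*E) (Ici t) t := by
        simpa using ((hasDerivAt_id t).const_mul ((k:ℝ)*E)).hasDerivWithinAt
      refine hder.congr_of_eventuallyEq ?_ (by rw [min_eq_left h.le])
      filter_upwards [nhdsWithin_le_nhds (Iio_mem_nhds h)] with s hs
      rw [min_eq_left hs.le]
    · have hge : τ ≤ t := not_lt.1 h
      have : vt t = 0 := if_neg h
      rw [this]
      have hder : HasDerivWithinAt (fun _ : ℝ => (k:ℝ)*E*τ) 0 (Ici t) t :=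
        hasDerivWithinAt_const t _ _
      refine hder.congr (fun s hs => ?_) (by rw [min_eq_right hge])
      rw [min_eq_right (le_trans hge hs)]
  -- the conserved quantity
  set φ : ℝ → ℝ := fun t => x4 t * Real.exp (-A t) - (k:ℝ)*E * min t τ with hφdef
  have hφc : ContinuousOn φ (Icc (0:ℝ) (2*π)) := by
    apply ContinuousOn.sub
    · exact hx4c.mul ((Real.continuous_exp.comp hAcont.neg).continuousOn)
    · exact (continuous_const.mul (continuous_id.min continuous_const)).continuousOn
  have hφd : ∀ t ∈ Ico (0:ℝ) (2*π), HasDerivWithinAt φ 0 (Ici t) t := by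
    intro t ht
    have d1 := (hx4d t ht).mul (((hAd t ht).neg).exp)
    have dd := d1.sub (hmind t ht)
    refine HasDerivWithinAt.congr_deriv (f := φ) dd ?_
    symm
    show (0:ℝ) = G t * Real.exp (-A t) + x4 t * (Real.exp (-A t) * -(W t)) - vt t
    show (0:ℝ) = (vt t + x4 t * W t) * Real.exp (-A t)
      + x4 t * (Real.exp (-A t) * -(W t)) - vt t
    by_cases h : t < τ
    · rw [hA0 t h.le, neg_zero, Real.exp_zero]; ring
    · rw [show vt t = 0 from if_neg h]; ring
  have hconst := constant_of_has_deriv_right_zero hφc hφd (2*π)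
    ⟨by positivity, le_rfl⟩
  have hφ0 : φ 0 = 0 := by
    show x4 0 * Real.exp (-A 0) - (k:ℝ)*E * min 0 τ = 0
    rw [hGx4 0 ⟨le_rfl, by positivity⟩, intervalIntegral.integral_same,
      min_eq_left hτpos.le]
    ring
  rw [hφ0] at hconst
  have hmain : x4 (2*π) * Real.exp (-A (2*π)) = (k:ℝ)*E*τ := by
    have h2 : x4 (2*π) * Real.exp (-A (2*π)) - (k:ℝ)*E * min (2*π) τ = 0 := hconst
    rw [min_eq_right hτle] at h2
    linarith
  have hx4val : x4 (2*π) = ((k:ℝ)*E*τ) * Real.exp (A (2*π)) := by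
    have hee : Real.exp (-A (2*π)) * Real.exp (A (2*π)) = 1 := by
      rw [← Real.exp_add]; simp
    calc x4 (2*π) = x4 (2*π) * (Real.exp (-A (2*π)) * Real.exp (A (2*π))) := by
          rw [hee, mul_one]
      _ = (x4 (2*π) * Real.exp (-A (2*π))) * Real.exp (A (2*π)) := by ring
      _ = ((k:ℝ)*E*τ) * Real.exp (A (2*π)) := by rw [hmain]
  rw [hx4val]
  have hA2 : A (2*π) = c * (2*π - Real.sin ((k:ℝ)*(2*π))/k - τ) := by
    show c * (max (2*π) τ - Real.sin ((k:ℝ) * max (2*π) τ)/k - τ) = _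
    rw [max_eq_left hτle]
  have hprod : (k:ℝ) * E * τ * Real.exp (A (2*π))
      = 2*π * (Real.exp (-(2*π)*c) * Real.exp (A (2*π))) := by
    rw [hEdef, hτdef]; field_simp
  rw [hprod, ← Real.exp_add]
  congr 1
  rw [hA2, hτdef, show ((k:ℝ)*(2*π)) = 2*π*k by ring, hcdef]
  ring


/-- Example 2.1 of the paper: for the impulsive system
`ẋ₁ = u̇₁, ẋ₂ = u̇₂, ẋ₃ = x₃(x₂u̇₁ - x₁u̇₂), ẋ₄ = v + x₄(x₁u̇₂ - x₂u̇₁)` with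
`x(0) = (0,0,1,0)` and the controls `u_k, v_k` below, one has
`x₄ₖ(2π) = 2π e^{-k^{1/3}(sin(2πk)/k + 2π/k)} → 2π`, while `u_k → 0` pointwise and
`‖v_k‖_{L¹} → 0`. -/
theorem impulsive_example
    (u1 u2 du1 du2 v x1 x2 x3 x4 : ℕ → ℝ → ℝ)
    (hu1 : ∀ (k : ℕ) (t : ℝ), u1 k t =
      if t < 2 * π / k then 0 else (k : ℝ) ^ (-(1:ℝ)/3) * (Real.cos (k * t) - 1))
    (hu2 : ∀ (k : ℕ) (t : ℝ), u2 k t =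
      if t < 2 * π / k then 0 else (k : ℝ) ^ (-(1:ℝ)/3) * Real.sin (k * t))
    (hdu1 : ∀ (k : ℕ) (t : ℝ), du1 k t =
      if t < 2 * π / k then 0 else -((k : ℝ) ^ ((2:ℝ)/3)) * Real.sin (k * t))
    (hdu2 : ∀ (k : ℕ) (t : ℝ), du2 k t =
      if t < 2 * π / k then 0 else (k : ℝ) ^ ((2:ℝ)/3) * Real.cos (k * t))
    (hv : ∀ (k : ℕ) (t : ℝ), v k t =
      if t ≤ 2 * π / k then (k : ℝ) * Real.exp (-(2 * π) * (k : ℝ) ^ ((1:ℝ)/3)) else 0)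
    (hx1 : ∀ k : ℕ, 1 ≤ k → ∀ t ∈ Icc (0:ℝ) (2 * π),
      x1 k t = ∫ s in (0:ℝ)..t, du1 k s)
    (hx2 : ∀ k : ℕ, 1 ≤ k → ∀ t ∈ Icc (0:ℝ) (2 * π),
      x2 k t = ∫ s in (0:ℝ)..t, du2 k s)
    (hx3c : ∀ k : ℕ, 1 ≤ k → ContinuousOn (x3 k) (Icc (0:ℝ) (2 * π)))
    (hx3i : ∀ k : ℕ, 1 ≤ k → IntervalIntegrable
      (fun s => x3 k s * (x2 k s * du1 k s - x1 k s * du2 k s)) volume 0 (2 * π))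
    (hx3 : ∀ k : ℕ, 1 ≤ k → ∀ t ∈ Icc (0:ℝ) (2 * π),
      x3 k t = 1 + ∫ s in (0:ℝ)..t, x3 k s * (x2 k s * du1 k s - x1 k s * du2 k s))
    (hx4c : ∀ k : ℕ, 1 ≤ k → ContinuousOn (x4 k) (Icc (0:ℝ) (2 * π)))
    (hx4i : ∀ k : ℕ, 1 ≤ k → IntervalIntegrable
      (fun s => v k s + x4 k s * (x1 k s * du2 k s - x2 k s * du1 k s)) volume 0 (2 * π))
    (hx4 : ∀ k : ℕ, 1 ≤ k → ∀ t ∈ Icc (0:ℝ) (2 * π),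
      x4 k t = ∫ s in (0:ℝ)..t, (v k s + x4 k s * (x1 k s * du2 k s - x2 k s * du1 k s))) :
    (∀ k : ℕ, 1 ≤ k → x4 k (2 * π) =
      2 * π * Real.exp (-((k : ℝ) ^ ((1:ℝ)/3)) * (Real.sin (2 * π * k) / k + 2 * π / k))) ∧
    Tendsto (fun k : ℕ => x4 k (2 * π)) atTop (𝓝 (2 * π)) ∧
    (∀ t ∈ Icc (0:ℝ) (2 * π),
      Tendsto (fun k : ℕ => (u1 k t, u2 k t)) atTop (𝓝 ((0 : ℝ), (0 : ℝ)))) ∧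
    Tendsto (fun k : ℕ => ∫ t in (0:ℝ)..(2 * π), |v k t|) atTop (𝓝 0) := by
  have key : ∀ k : ℕ, 1 ≤ k → x4 k (2 * π) =
      2 * π * Real.exp (-((k : ℝ) ^ ((1:ℝ)/3)) * (Real.sin (2 * π * k) / k + 2 * π / k)) :=
    fun k hk => impulsive_aux k hk (du1 k) (du2 k) (v k) (x1 k) (x2 k) (x4 k)
      (hdu1 k) (hdu2 k) (hv k) (hx1 k hk) (hx2 k hk) (hx4c k hk) (hx4i k hk) (hx4 k hk)
  refine ⟨key, ?_⟩
  have rest :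
    Tendsto (fun k : ℕ => x4 k (2 * π)) atTop (𝓝 (2 * π)) ∧
    (∀ t ∈ Icc (0:ℝ) (2 * π),
      Tendsto (fun k : ℕ => (u1 k t, u2 k t)) atTop (𝓝 ((0 : ℝ), (0 : ℝ)))) ∧
    Tendsto (fun k : ℕ => ∫ t in (0:ℝ)..(2 * π), |v k t|) atTop (𝓝 0) := by
    have hπ : (0:ℝ) < π := Real.pi_pos
    have hrp : Tendsto (fun k : ℕ => (k:ℝ) ^ (-(1:ℝ)/3)) atTop (𝓝 0) := by
      have : Tendsto (fun x : ℝ => x ^ (-((1:ℝ)/3))) atTop (𝓝 0) :=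
        tendsto_rpow_neg_atTop (by norm_num)
      have := this.comp (tendsto_natCast_atTop_atTop (R := ℝ))
      simpa [Function.comp_def, neg_div] using this
    refine ⟨?_, ?_, ?_⟩
    · -- part 2
      have heq : ∀ᶠ k : ℕ in atTop, 2 * π * Real.exp (-(2*π) * ((k:ℝ) ^ (-(2:ℝ)/3)))
          = x4 k (2 * π) := by
        filter_upwards [eventually_ge_atTop 1] with k hk
        have hk0 : (0:ℝ) < k := by exact_mod_cast hk
        rw [key k hk]
        have hsin : Real.sin (2 * π * k) = 0 := by
          have := Real.sin_nat_mul_pi (2 * k)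
          push_cast at this
          rw [show 2 * π * (k:ℝ) = 2 * (k:ℝ) * π by ring]
          exact this
        rw [hsin]
        congr 1
        rw [zero_div, zero_add]
        have hr : (k:ℝ) ^ (-(2:ℝ)/3) * (k:ℝ) = (k:ℝ) ^ ((1:ℝ)/3) := by
          rw [show ((1:ℝ)/3) = -(2:ℝ)/3 + 1 by norm_num, Real.rpow_add hk0, Real.rpow_one]
        have hmain : (k:ℝ) ^ ((1:ℝ)/3) * (2*π/(k:ℝ)) = 2 * π * (k:ℝ) ^ (-(2:ℝ)/3) := by
          rw [← hr]; field_simp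
        rw [neg_mul, neg_mul, hmain]
      have h1 : Tendsto (fun k : ℕ => (k:ℝ) ^ (-(2:ℝ)/3)) atTop (𝓝 0) := by
        have : Tendsto (fun x : ℝ => x ^ (-((2:ℝ)/3))) atTop (𝓝 0) :=
          tendsto_rpow_neg_atTop (by norm_num)
        have := this.comp (tendsto_natCast_atTop_atTop (R := ℝ))
        simpa [Function.comp_def, neg_div] using this
      have h2 : Tendsto (fun k : ℕ => 2 * π * Real.exp (-(2*π) * ((k:ℝ) ^ (-(2:ℝ)/3))))
          atTop (𝓝 (2 * π)) := by
        have h3 : Tendsto (fun k : ℕ => -(2*π) * ((k:ℝ) ^ (-(2:ℝ)/3))) atTop (𝓝 0) := by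
          simpa using h1.const_mul (-(2*π))
        have h4 := (Real.continuous_exp.tendsto 0).comp h3
        simpa [Function.comp] using h4.const_mul (2 * π)
      exact h2.congr' heq
    · -- part 3
      intro t ht
      have bound : ∀ (w : ℝ → ℝ) (C : ℝ), 0 ≤ C → (∀ s, |w s| ≤ C) → ∀ (f : ℕ → ℝ),
          (∀ k : ℕ, 1 ≤ k → f k = if t < 2 * π / k then 0
            else (k : ℝ) ^ (-(1:ℝ)/3) * w (k * t)) → Tendsto f atTop (𝓝 0) := by
        intro w C hC0 hC f hf
        apply squeeze_zero_norm' (a := fun k : ℕ => (k:ℝ) ^ (-(1:ℝ)/3) * C)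
        · filter_upwards [eventually_ge_atTop 1] with k hk
          rw [hf k hk]
          by_cases h : t < 2 * π / k
          · rw [if_pos h]
            simp only [norm_zero]
            positivity
          · rw [if_neg h]
            rw [Real.norm_eq_abs, abs_mul,
              abs_of_nonneg (by positivity : (0:ℝ) ≤ (k:ℝ) ^ (-(1:ℝ)/3))]
            exact mul_le_mul_of_nonneg_left (hC _) (by positivity)
        · simpa using hrp.mul_const C
      have h1 : Tendsto (fun k : ℕ => u1 k t) atTop (𝓝 0) := by
        refine bound (fun s => Real.cos s - 1) 2 (by norm_num) (fun s => ?_) _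
          (fun k _ => hu1 k t)
        have ha := Real.neg_one_le_cos s
        have hb := Real.cos_le_one s
        rw [abs_le]; constructor <;> simp <;> linarith
      have h2 : Tendsto (fun k : ℕ => u2 k t) atTop (𝓝 0) := by
        refine bound (fun s => Real.sin s) 2 (by norm_num) (fun s => ?_) _
          (fun k _ => hu2 k t)
        exact le_trans (Real.abs_sin_le_one s) (by norm_num)
      exact h1.prodMk_nhds h2
    · -- part 4
      have hlim : Tendsto (fun k : ℕ => 2 * π * Real.exp (-(2*π) * (k:ℝ) ^ ((1:ℝ)/3)))
          atTop (𝓝 0) := by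
        have h1 : Tendsto (fun k : ℕ => (k:ℝ) ^ ((1:ℝ)/3)) atTop atTop :=
          (tendsto_rpow_atTop (by norm_num)).comp (tendsto_natCast_atTop_atTop (R := ℝ))
        have h2 : Tendsto (fun k : ℕ => -(2*π) * (k:ℝ) ^ ((1:ℝ)/3)) atTop atBot := by
          have := (h1.const_mul_atTop (by positivity : (0:ℝ) < 2*π))
          have := tendsto_neg_atTop_atBot.comp this
          simpa [Function.comp_def, neg_mul] using this
        have h3 := Real.tendsto_exp_atBot.comp h2
        simpa [Function.comp] using h3.const_mul (2*π)
      have heq : ∀ᶠ k : ℕ in atTop, 2 * π * Real.exp (-(2*π) * (k:ℝ) ^ ((1:ℝ)/3))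
          = ∫ s in (0:ℝ)..(2*π), |v k s| := by
        filter_upwards [eventually_ge_atTop 1] with k hk
        have hk0 : (0:ℝ) < k := by exact_mod_cast hk
        set τ : ℝ := 2 * π / k with hτ
        set E : ℝ := Real.exp (-(2*π) * (k:ℝ) ^ ((1:ℝ)/3)) with hE
        have hE0 : 0 ≤ (k:ℝ) * E := by positivity
        have hτpos : 0 < τ := by positivity
        have hτle : τ ≤ 2 * π := by
          rw [hτ, div_le_iff₀ hk0]
          nlinarith [(by exact_mod_cast hk : (1:ℝ) ≤ k)]
        have habs : ∀ s, |v k s| = (Iic τ).indicator (fun _ => (k:ℝ) * E) s := by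
          intro s
          rw [hv k s, ← hτ]
          by_cases h : s ≤ τ
          · simp only [if_pos h, Set.indicator_apply, Set.mem_Iic, h, if_true]
            exact abs_of_nonneg hE0
          · simp [Set.indicator_apply, Set.mem_Iic, h]
        have hival : ∀ a b : ℝ, IntervalIntegrable (fun s => |v k s|) volume a b := by
          intro a b
          apply IntegrableOn.intervalIntegrable
          have h1 : IntegrableOn (fun _ : ℝ => (k:ℝ)*E) (uIcc a b) volume := by
            exact integrableOn_const measure_Icc_lt_top.ne
          exact (h1.indicator measurableSet_Iic).congr
            (Filter.Eventually.of_forall fun s => (habs s).symm)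
        have e1 : ∫ s in (0:ℝ)..τ, |v k s| = τ * ((k:ℝ) * E) := by
          rw [intervalIntegral.integral_congr (g := fun _ => (k:ℝ)*E) ?_,
            intervalIntegral.integral_const]
          · rw [smul_eq_mul]; ring
          · intro s hs
            rw [uIcc_of_le hτpos.le] at hs
            show |v k s| = (k:ℝ) * E
            rw [hv k s, if_pos hs.2]
            exact abs_of_nonneg hE0
        have e2 : ∫ s in τ..(2*π), |v k s| = 0 := by
          rw [intervalIntegral.integral_congr_ae (g := fun _ => (0:ℝ))
            (ae_of_all _ ?_), intervalIntegral.integral_zero]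
          intro s hs
          rw [Set.uIoc_of_le hτle] at hs
          show |v k s| = 0
          rw [hv k s, if_neg (not_le.2 hs.1), abs_zero]
        rw [← intervalIntegral.integral_add_adjacent_intervals (hival 0 τ) (hival τ (2*π)),
          e1, e2, add_zero, hτ]
        field_simp
      exact hlim.congr' heq
  exact rest
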